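/- Let 0 < a < b, let f : [a,b] → ℝ be continuous on [a,b] and differentiable on (a,b), and let w : [a,b] → ℝ be nonnegative and integrable with ∫ₐᵇ w(t) dt > 0. Set x := (∫ₐᵇ t·w(t) dt)/(∫ₐᵇ w(t) dt), which lies in [a,b]. Then |f(x) − (1/∫ₐᵇ w(t) dt)·∫ₐᵇ f(t)w(t) dt| ≤ ‖f − ℓf′‖∞ · [ (∫ₐˣ w(t) dt − ∫ₓᵇ w(t) dt)/(∫ₐᵇ w(t) dt) + (∫ₓᵇ t·w(t) dt − ∫ₐˣ t·w(t) dt)/(∫ₐᵇ t·w(t) dt) ]. -/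

import Mathlib

open Set in
lemma pompeiu_mvt {a b : ℝ} (f : ℝ → ℝ) (ha : 0 < a)
    (hf : ContinuousOn f (Set.Icc a b))
    (hd : DifferentiableOn ℝ f (Set.Ioo a b))
    {u v : ℝ} (hu : u ∈ Set.Icc a b) (hv : v ∈ Set.Icc a b) (huv : u < v) :
    ∃ ξ ∈ Set.Ioo a b, v * f u - u * f v = (f ξ - ξ * deriv f ξ) * (v - u) := by
  have hu0 : 0 < u := lt_of_lt_of_le ha hu.1
  have hv0 : 0 < v := lt_of_lt_of_le ha hv.1
  have hiv : v⁻¹ < u⁻¹ := (inv_lt_inv₀ hv0 hu0).mpr huv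
  set g : ℝ → ℝ := fun s => s * f s⁻¹ with hg
  set g' : ℝ → ℝ := fun s => f s⁻¹ - s⁻¹ * deriv f s⁻¹ with hg'
  have hmem : ∀ s ∈ Set.Icc v⁻¹ u⁻¹, s⁻¹ ∈ Set.Icc a b := by
    intro s hs
    have hs0 : 0 < s := lt_of_lt_of_le (by positivity) hs.1
    constructor
    · have h1 : u ≤ s⁻¹ := (le_inv_comm₀ hu0 hs0).mpr hs.2
      linarith [hu.1]
    · have h2 : s⁻¹ ≤ v := (inv_le_comm₀ hs0 hv0).mpr hs.1
      linarith [hv.2]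
  have hmemo : ∀ s ∈ Set.Ioo v⁻¹ u⁻¹, s⁻¹ ∈ Set.Ioo a b := by
    intro s hs
    have hs0 : 0 < s := lt_trans (by positivity) hs.1
    constructor
    · have h1 : u < s⁻¹ := (lt_inv_comm₀ hu0 hs0).mpr hs.2
      linarith [hu.1]
    · have h2 : s⁻¹ < v := (inv_lt_comm₀ hs0 hv0).mpr hs.1
      linarith [hv.2]
  have hgc : ContinuousOn g (Set.Icc v⁻¹ u⁻¹) := by
    apply continuousOn_id.mul
    apply hf.comp (continuousOn_id.inv₀ fun s hs => ne_of_gt (lt_of_lt_of_le (by positivity) hs.1))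
    intro s hs
    exact hmem s hs
  have hgd : ∀ s ∈ Set.Ioo v⁻¹ u⁻¹, HasDerivAt g (g' s) s := by
    intro s hs
    have hs0 : 0 < s := lt_trans (by positivity) hs.1
    have hms : s⁻¹ ∈ Set.Ioo a b := hmemo s hs
    have hfd : DifferentiableAt ℝ f s⁻¹ :=
      (hd s⁻¹ hms).differentiableAt (isOpen_Ioo.mem_nhds hms)
    have h1 : HasDerivAt f (deriv f s⁻¹) s⁻¹ := hfd.hasDerivAt
    have h2 : HasDerivAt (fun y : ℝ => y⁻¹) (-(s ^ 2)⁻¹) s := hasDerivAt_inv (ne_of_gt hs0)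
    have h3 : HasDerivAt (fun y : ℝ => f y⁻¹) (deriv f s⁻¹ * (-(s ^ 2)⁻¹)) s := h1.comp s h2
    have h4 := (hasDerivAt_id s).mul h3
    convert h4 using 1
    have : s ≠ 0 := ne_of_gt hs0
    · rfl
    · rfl
    · rfl
    · simp only [hg', id]
      field_simp
      ring
  obtain ⟨η, hη, hslope⟩ := exists_hasDerivAt_eq_slope g g' hiv hgc hgd
  refine ⟨η⁻¹, hmemo η hη, ?_⟩
  have hη0 : 0 < η := lt_trans (by positivity) hη.1
  have hune : (u : ℝ) ≠ 0 := ne_of_gt hu0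
  have hvne : (v : ℝ) ≠ 0 := ne_of_gt hv0
  have hηne : η ≠ 0 := ne_of_gt hη0
  have hd2 : u⁻¹ - v⁻¹ ≠ 0 := sub_ne_zero.mpr (ne_of_gt hiv)
  simp only [hg, hg', inv_inv] at hslope ⊢
  rw [hslope]
  have hvu : v - u ≠ 0 := sub_ne_zero.mpr huv.ne'
  field_simp

open MeasureTheory intervalIntegral Set in
/-- Corollary 4.2: the weighted Ostrowski–Pompeiu inequality at the weighted mean point. -/
theorem ostrowski_pompeiu_weighted_mean_point (a b : ℝ) (f w : ℝ → ℝ)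
    (ha : 0 < a) (hab : a < b)
    (hf : ContinuousOn f (Set.Icc a b))
    (hd : DifferentiableOn ℝ f (Set.Ioo a b))
    (hw0 : ∀ t ∈ Set.Icc a b, 0 ≤ w t)
    (hwi : IntervalIntegrable w MeasureTheory.volume a b)
    (hwpos : 0 < ∫ t in a..b, w t)
    (hbdd : BddAbove ((fun ξ => |f ξ - ξ * deriv f ξ|) '' Set.Ioo a b))
    (x : ℝ) (hxdef : x = (∫ t in a..b, t * w t) / ∫ t in a..b, w t) :
    x ∈ Set.Icc a b ∧
      |f x - (1 / ∫ t in a..b, w t) * ∫ t in a..b, f t * w t| ≤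
        sSup ((fun ξ => |f ξ - ξ * deriv f ξ|) '' Set.Ioo a b) *
          (((∫ t in a..x, w t) - ∫ t in x..b, w t) / (∫ t in a..b, w t) +
            ((∫ t in x..b, t * w t) - ∫ t in a..x, t * w t) / ∫ t in a..b, t * w t) := by
  have hab' : a ≤ b := hab.le
  have huIcc : Set.uIcc a b = Set.Icc a b := Set.uIcc_of_le hab'
  set W := ∫ t in a..b, w t with hWdef
  set M := ∫ t in a..b, t * w t with hMdef
  have htw : IntervalIntegrable (fun t => t * w t) volume a b :=
    hwi.continuousOn_mul (by rw [huIcc]; exact continuousOn_id)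
  have haw : a * W ≤ M := by
    rw [hWdef, hMdef, ← intervalIntegral.integral_const_mul]
    refine intervalIntegral.integral_mono_on hab' (hwi.const_mul a) htw ?_
    intro t ht
    exact mul_le_mul_of_nonneg_right ht.1 (hw0 t ht)
  have hbw : M ≤ b * W := by
    rw [hWdef, hMdef, ← intervalIntegral.integral_const_mul]
    refine intervalIntegral.integral_mono_on hab' htw (hwi.const_mul b) ?_
    intro t ht
    exact mul_le_mul_of_nonneg_right ht.2 (hw0 t ht)
  have hW0 : 0 < W := hwpos
  have hM0 : 0 < M := lt_of_lt_of_le (by positivity) haw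
  have hxa : a ≤ x := by rw [hxdef, le_div_iff₀ hW0]; exact haw
  have hxb : x ≤ b := by rw [hxdef, div_le_iff₀ hW0]; linarith
  have hx0 : 0 < x := lt_of_lt_of_le ha hxa
  have hxI : x ∈ Set.Icc a b := ⟨hxa, hxb⟩
  have hMxW : M = x * W := by rw [hxdef]; field_simp
  refine ⟨hxI, ?_⟩
  set K := sSup ((fun ξ => |f ξ - ξ * deriv f ξ|) '' Set.Ioo a b) with hK
  -- pointwise Pompeiu bound
  have hKb : ∀ t ∈ Set.Icc a b, |t * f x - x * f t| ≤ K * |t - x| := by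
    intro t ht
    rcases lt_trichotomy t x with h | h | h
    · obtain ⟨ξ, hξ, heq⟩ := pompeiu_mvt f ha hf hd ht hxI h
      have hle : |f ξ - ξ * deriv f ξ| ≤ K := le_csSup hbdd ⟨ξ, hξ, rfl⟩
      have heq2 : t * f x - x * f t = (f ξ - ξ * deriv f ξ) * (t - x) := by
        linear_combination -heq
      rw [heq2, abs_mul]
      exact mul_le_mul_of_nonneg_right hle (abs_nonneg _)
    · simp [h]
    · obtain ⟨ξ, hξ, heq⟩ := pompeiu_mvt f ha hf hd hxI ht h
      have hle : |f ξ - ξ * deriv f ξ| ≤ K := le_csSup hbdd ⟨ξ, hξ, rfl⟩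
      rw [heq, abs_mul]
      exact mul_le_mul_of_nonneg_right hle (abs_nonneg _)
  -- integrability
  have hfc : ContinuousOn f (Set.uIcc a b) := by rw [huIcc]; exact hf
  have hfw : IntervalIntegrable (fun t => f t * w t) volume a b :=
    hwi.continuousOn_mul hfc
  have hhc : ContinuousOn (fun t => t * f x - x * f t) (Set.uIcc a b) :=
    (continuousOn_id.mul continuousOn_const).sub (continuousOn_const.mul hfc)
  have hhw : IntervalIntegrable (fun t => (t * f x - x * f t) * w t) volume a b :=
    hwi.continuousOn_mul hhc
  have habsw : IntervalIntegrable (fun t => |t - x| * w t) volume a b :=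
    hwi.continuousOn_mul ((continuous_abs.comp (continuous_id.sub continuous_const)).continuousOn)
  -- the key integral inequality
  have key : |f x * M - x * ∫ t in a..b, f t * w t| ≤ K * ∫ t in a..b, |t - x| * w t := by
    have h1 : f x * M - x * ∫ t in a..b, f t * w t
        = ∫ t in a..b, (t * f x - x * f t) * w t := by
      rw [hMdef, ← intervalIntegral.integral_const_mul, ← intervalIntegral.integral_const_mul,
        ← intervalIntegral.integral_sub (htw.const_mul (f x)) (hfw.const_mul x)]
      congr 1
      funext t
      ring
    rw [h1]
    calc |∫ t in a..b, (t * f x - x * f t) * w t|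
        ≤ ∫ t in a..b, |(t * f x - x * f t) * w t| :=
          intervalIntegral.abs_integral_le_integral_abs hab'
      _ ≤ ∫ t in a..b, K * (|t - x| * w t) := by
          refine intervalIntegral.integral_mono_on hab' hhw.abs (habsw.const_mul K) ?_
          intro t ht
          rw [abs_mul, abs_of_nonneg (hw0 t ht), ← mul_assoc]
          exact mul_le_mul_of_nonneg_right (hKb t ht) (hw0 t ht)
      _ = K * ∫ t in a..b, |t - x| * w t := intervalIntegral.integral_const_mul _ _
  -- split the absolute-moment integral at x
  have hsub1 : Set.uIcc a x ⊆ Set.uIcc a b := by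
    rw [huIcc, Set.uIcc_of_le hxa]; exact Set.Icc_subset_Icc le_rfl hxb
  have hsub2 : Set.uIcc x b ⊆ Set.uIcc a b := by
    rw [huIcc, Set.uIcc_of_le hxb]; exact Set.Icc_subset_Icc hxa le_rfl
  have hwax : IntervalIntegrable w volume a x := hwi.mono_set hsub1
  have hwxb : IntervalIntegrable w volume x b := hwi.mono_set hsub2
  have htwax : IntervalIntegrable (fun t => t * w t) volume a x := htw.mono_set hsub1
  have htwxb : IntervalIntegrable (fun t => t * w t) volume x b := htw.mono_set hsub2
  have habswax : IntervalIntegrable (fun t => |t - x| * w t) volume a x := habsw.mono_set hsub1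
  have habswxb : IntervalIntegrable (fun t => |t - x| * w t) volume x b := habsw.mono_set hsub2
  have hsplit : (∫ t in a..b, |t - x| * w t)
      = x * ((∫ t in a..x, w t) - ∫ t in x..b, w t)
        + ((∫ t in x..b, t * w t) - ∫ t in a..x, t * w t) := by
    have h2 : (∫ t in a..x, |t - x| * w t) + (∫ t in x..b, |t - x| * w t)
        = ∫ t in a..b, |t - x| * w t :=
      intervalIntegral.integral_add_adjacent_intervals habswax habswxb
    have h3 : (∫ t in a..x, |t - x| * w t) = ∫ t in a..x, (x * w t - t * w t) := by
      refine intervalIntegral.integral_congr ?_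
      intro t ht
      rw [Set.uIcc_of_le hxa] at ht
      show |t - x| * w t = x * w t - t * w t
      rw [abs_sub_comm, abs_of_nonneg (by linarith [ht.2] : (0:ℝ) ≤ x - t)]
      ring
    have h4 : (∫ t in x..b, |t - x| * w t) = ∫ t in x..b, (t * w t - x * w t) := by
      refine intervalIntegral.integral_congr ?_
      intro t ht
      rw [Set.uIcc_of_le hxb] at ht
      show |t - x| * w t = t * w t - x * w t
      rw [abs_of_nonneg (by linarith [ht.1] : (0:ℝ) ≤ t - x)]
      ring
    have h5 : (∫ t in a..x, (x * w t - t * w t))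
        = x * (∫ t in a..x, w t) - ∫ t in a..x, t * w t := by
      rw [intervalIntegral.integral_sub (hwax.const_mul x) htwax,
        intervalIntegral.integral_const_mul]
    have h6 : (∫ t in x..b, (t * w t - x * w t))
        = (∫ t in x..b, t * w t) - x * ∫ t in x..b, w t := by
      rw [intervalIntegral.integral_sub htwxb (hwxb.const_mul x),
        intervalIntegral.integral_const_mul]
    rw [← h2, h3, h4, h5, h6]
    ring
  -- put everything together
  have hgoal_eq : f x - (1 / W) * ∫ t in a..b, f t * w t
      = (f x * M - x * ∫ t in a..b, f t * w t) / M := by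
    rw [hMxW]
    field_simp
  have hrhs : K * (((∫ t in a..x, w t) - ∫ t in x..b, w t) / W
      + ((∫ t in x..b, t * w t) - ∫ t in a..x, t * w t) / M)
      = (K * ∫ t in a..b, |t - x| * w t) / M := by
    rw [hsplit, hMxW]
    field_simp
  rw [hgoal_eq, hrhs, abs_div, abs_of_pos hM0]
  gcongr
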